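/- (Triple barrier.) Let C : ℤ → U(2) satisfy the standing Assumption with C(x) = I₂ for all x ∈ ℤ∖{−1,0,1}, and let U = S∘C. Then for every λ ∈ ℂ∖{0}, there exists a nonzero outgoing map φ : ℤ → ℂ² with Uφ = λφ if and only if λ⁴ − (c₂₁(0)c₁₂(1) + c₂₁(−1)c₁₂(0))λ² − c₂₁(−1)c₁₂(1)·det C(0) = 0. -/

import Mathlib

noncomputable section

open scoped ComplexConjugate

/-- A state: a map ℤ → ℂ², components `ψ x 0` (left, ψ^L) and `ψ x 1` (right, ψ^R). -/
abbrev QWState := ℤ → Fin 2 → ℂ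

/-- The quantum walk operator U = S∘C acting pointwise:
`(Uψ)(x) = ((C(x+1)ψ(x+1))₁, (C(x−1)ψ(x−1))₂)`. -/
def qwalk (C : ℤ → Matrix (Fin 2) (Fin 2) ℂ) (ψ : QWState) : QWState :=
  fun x => ![(C (x + 1)).mulVec (ψ (x + 1)) 0, (C (x - 1)).mulVec (ψ (x - 1)) 1]

/-- The standing Assumption on the coin. -/
structure CoinAssumption (C : ℤ → Matrix (Fin 2) (Fin 2) ℂ) : Prop where
  unitary : ∀ x, C x ∈ Matrix.unitaryGroup (Fin 2) ℂ
  d11 : ∀ x, C x 0 0 ≠ 0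
  d22 : ∀ x, C x 1 1 ≠ 0
  fin : Set.Finite {x : ℤ | C x ≠ 1}

/-- Outgoing: ψ^L vanishes far right, ψ^R vanishes far left. -/
def Outgoing (ψ : QWState) : Prop :=
  ∃ r : ℤ, 0 < r ∧ ∀ x : ℤ, r < x → ψ x 0 = 0 ∧ ψ (-x) 1 = 0

/-- The explicit outgoing resonance eigenfunction built from a kernel vector `v`. -/
def resPhi (C : ℤ → Matrix (Fin 2) (Fin 2) ℂ) (lam : ℂ) (v : Fin 4 → ℂ) : QWState := fun x =>
  ![ if x = 0 then v 0 else if x = -1 then v 1 else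
       if x ≤ -2 then C (-1) 0 0 * v 1 * lam ^ (x + 1) else 0,
     if x = 0 then v 2 else if x = 1 then v 3 else
       if 2 ≤ x then C 1 1 1 * v 3 * lam ^ (1 - x) else 0 ]

lemma resPhi0 (C : ℤ → Matrix (Fin 2) (Fin 2) ℂ) (lam : ℂ) (v : Fin 4 → ℂ) (x : ℤ) :
    resPhi C lam v x 0 = if x = 0 then v 0 else if x = -1 then v 1 else
      if x ≤ -2 then C (-1) 0 0 * v 1 * lam ^ (x + 1) else 0 := rfl

lemma resPhi1 (C : ℤ → Matrix (Fin 2) (Fin 2) ℂ) (lam : ℂ) (v : Fin 4 → ℂ) (x : ℤ) :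
    resPhi C lam v x 1 = if x = 0 then v 2 else if x = 1 then v 3 else
      if 2 ≤ x then C 1 1 1 * v 3 * lam ^ (1 - x) else 0 := rfl

/-- Triple barrier: for λ ≠ 0, λ is a resonance iff
λ⁴ − (c₂₁(0)c₁₂(1) + c₂₁(−1)c₁₂(0))λ² − c₂₁(−1)c₁₂(1)·det C(0) = 0. -/
theorem triple_barrier_resonances
    (C : ℤ → Matrix (Fin 2) (Fin 2) ℂ) (hC : CoinAssumption C)
    (hsupp : ∀ x : ℤ, x ≠ -1 → x ≠ 0 → x ≠ 1 → C x = 1)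
    (lam : ℂ) (hlam : lam ≠ 0) :
    (∃ φ : QWState, (∃ x : ℤ, ∃ i : Fin 2, φ x i ≠ 0) ∧ Outgoing φ ∧
        (∀ x : ℤ, ∀ i : Fin 2, qwalk C φ x i = lam * φ x i))
      ↔ lam ^ 4 - (C 0 1 0 * C 1 0 1 + C (-1) 1 0 * C 0 0 1) * lam ^ 2
          - C (-1) 1 0 * C 1 0 1 * (C 0).det = 0 := by
  set A : Matrix (Fin 4) (Fin 4) ℂ :=
    !![lam, 0, 0, -(C 1 0 1);
       -(C 0 0 0), lam, -(C 0 0 1), 0;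
       0, -(C (-1) 1 0), lam, 0;
       -(C 0 1 0), 0, -(C 0 1 1), lam] with hA
  have hdet : A.det = lam ^ 4 - (C 0 1 0 * C 1 0 1 + C (-1) 1 0 * C 0 0 1) * lam ^ 2
      - C (-1) 1 0 * C 1 0 1 * (C 0).det := by
    rw [Matrix.det_fin_two (C 0)]
    simp [hA, Matrix.det_succ_row_zero, Fin.sum_univ_succ, Fin.succAbove, Fin.castSucc,
      Fin.castAdd, Fin.castLE]
    ring
  rw [← hdet]
  constructor
  · -- forward direction
    rintro ⟨φ, ⟨x0, i0, hne⟩, ⟨r, hr, hout⟩, heig⟩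
    have eigL : ∀ x : ℤ,
        C (x+1) 0 0 * φ (x+1) 0 + C (x+1) 0 1 * φ (x+1) 1 = lam * φ x 0 := by
      intro x
      have h := heig x 0
      simpa [qwalk, Matrix.mulVec, dotProduct, Fin.sum_univ_two] using h
    have eigR : ∀ x : ℤ,
        C (x-1) 1 0 * φ (x-1) 0 + C (x-1) 1 1 * φ (x-1) 1 = lam * φ x 1 := by
      intro x
      have h := heig x 1
      simpa [qwalk, Matrix.mulVec, dotProduct, Fin.sum_univ_two] using h
    have stepL : ∀ x : ℤ, 1 ≤ x → φ (x+1) 0 = lam * φ x 0 := by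
      intro x hx
      have h1 : C (x+1) = 1 := hsupp _ (by omega) (by omega) (by omega)
      have := eigL x
      rw [h1] at this
      simpa [Matrix.one_apply] using this
    have stepR : ∀ x : ℤ, x ≤ -1 → φ (x-1) 1 = lam * φ x 1 := by
      intro x hx
      have h1 : C (x-1) = 1 := hsupp _ (by omega) (by omega) (by omega)
      have := eigR x
      rw [h1] at this
      simpa [Matrix.one_apply] using this
    have iterL : ∀ n : ℕ, ∀ x : ℤ, 1 ≤ x → φ (x + n) 0 = lam ^ n * φ x 0 := by
      intro n
      induction n with
      | zero => intro x _; simp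
      | succ n ih =>
        intro x hx
        have h2 : (x + ((n : ℤ) + 1)) = (x + n) + 1 := by ring
        have hn : (0 : ℤ) ≤ n := Int.ofNat_nonneg n
        push_cast
        rw [h2, stepL (x + n) (by omega), ih x hx, pow_succ]
        ring
    have iterR : ∀ n : ℕ, ∀ x : ℤ, x ≤ -1 → φ (x - n) 1 = lam ^ n * φ x 1 := by
      intro n
      induction n with
      | zero => intro x _; simp
      | succ n ih =>
        intro x hx
        have h2 : (x - ((n : ℤ) + 1)) = (x - n) - 1 := by ring
        have hn : (0 : ℤ) ≤ n := Int.ofNat_nonneg n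
        push_cast
        rw [h2, stepR (x - n) (by omega), ih x hx, pow_succ]
        ring
    have haL : ∀ x : ℤ, 1 ≤ x → φ x 0 = 0 := by
      intro x hx
      set n : ℕ := (r - x).toNat + 1 with hn
      have h1 : (r - x) ≤ ((r - x).toNat : ℤ) := Int.self_le_toNat _
      have hxn : r < x + n := by
        have : ((n : ℤ)) = ((r - x).toNat : ℤ) + 1 := by push_cast [hn]; ring
        omega
      have h0 := (hout (x + n) hxn).1
      have h2 := iterL n x hx
      rw [h0] at h2
      exact ((mul_eq_zero.mp h2.symm).resolve_left (pow_ne_zero _ hlam))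
    have hbR : ∀ x : ℤ, x ≤ -1 → φ x 1 = 0 := by
      intro x hx
      set n : ℕ := (r + x).toNat + 1 with hn
      have h1 : (r + x) ≤ ((r + x).toNat : ℤ) := Int.self_le_toNat _
      have hxn : r < n - x := by
        have : ((n : ℤ)) = ((r + x).toNat : ℤ) + 1 := by push_cast [hn]; ring
        omega
      have h0 := (hout (n - x) hxn).2
      have hxx : -((n : ℤ) - x) = x - n := by ring
      rw [hxx] at h0
      have h2 := iterR n x hx
      rw [h0] at h2
      exact ((mul_eq_zero.mp h2.symm).resolve_left (pow_ne_zero _ hlam))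
    have ha1 : φ 1 0 = 0 := haL 1 le_rfl
    have hb1 : φ (-1) 1 = 0 := hbR (-1) le_rfl
    have hE0 := eigL 0
    have hE1 := eigL (-1)
    have hE2 := eigR 0
    have hE3 := eigR 1
    norm_num at hE0 hE1 hE2 hE3
    set v : Fin 4 → ℂ := ![φ 0 0, φ (-1) 0, φ 0 1, φ 1 1] with hvdef
    have hv : A.mulVec v = 0 := by
      funext i
      fin_cases i <;>
        simp [hA, hvdef, Matrix.mulVec, dotProduct, Fin.sum_univ_four]
      · linear_combination C 1 0 0 * ha1 - hE0
      · linear_combination -hE1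
      · linear_combination C (-1) 1 1 * hb1 - hE2
      · linear_combination -hE3
    have hvne : v ≠ 0 := by
      intro hv0
      have hz : ∀ i : Fin 4, v i = 0 := fun i => congrFun hv0 i
      have z0 : φ 0 0 = 0 := hz 0
      have z1 : φ (-1) 0 = 0 := hz 1
      have z2 : φ 0 1 = 0 := hz 2
      have z3 : φ 1 1 = 0 := hz 3
      -- left tail vanishes
      have downL : ∀ n : ℕ, φ (-2 - n) 0 = 0 := by
        intro n
        induction n with
        | zero =>
          have h := eigL (-2)
          norm_num [z1, hb1] at h
          rcases h with h | h
          · exact absurd h hlam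
          · simpa using h
        | succ n ih =>
          have h1 : C (-2 - n) = 1 := by
            have hn : (0 : ℤ) ≤ n := Int.ofNat_nonneg n
            exact hsupp _ (by omega) (by omega) (by omega)
          have h := eigL (-3 - n)
          have h3 : (-3 - (n : ℤ)) + 1 = -2 - n := by ring
          rw [h3, h1] at h
          simp [Matrix.one_apply, ih] at h
          rcases h with h | h
          · exact absurd h hlam
          · have h4 : (-2 - ((n : ℤ) + 1)) = -3 - n := by ring
            push_cast
            rw [h4]
            exact h
      have upR : ∀ n : ℕ, φ (2 + n) 1 = 0 := by
        intro n
        induction n with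
        | zero =>
          have h := eigR 2
          norm_num [z3, ha1] at h
          rcases h with h | h
          · exact absurd h hlam
          · simpa using h
        | succ n ih =>
          have h1 : C (2 + n) = 1 := by
            have hn : (0 : ℤ) ≤ n := Int.ofNat_nonneg n
            exact hsupp _ (by omega) (by omega) (by omega)
          have h := eigR (3 + n)
          have h3 : (3 + (n : ℤ)) - 1 = 2 + n := by ring
          rw [h3, h1] at h
          simp [Matrix.one_apply, ih] at h
          rcases h with h | h
          · exact absurd h hlam
          · have h4 : (2 + ((n : ℤ) + 1)) = 3 + n := by ring
            push_cast
            rw [h4]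
            exact h
      have hall : ∀ x : ℤ, ∀ i : Fin 2, φ x i = 0 := by
        intro x i
        fin_cases i
        · rcases le_or_gt 1 x with hx | hx
          · exact haL x hx
          rcases eq_or_ne x 0 with rfl | hx0
          · exact z0
          rcases eq_or_ne x (-1) with rfl | hx1
          · exact z1
          have hx2 : x ≤ -2 := by omega
          have hn : x = -2 - ((-2 - x).toNat : ℤ) := by
            have := Int.self_le_toNat (-2 - x)
            have h2 : (0:ℤ) ≤ -2 - x := by omega
            rw [Int.toNat_of_nonneg h2]; ring
          rw [hn]
          exact downL _
        · rcases le_or_gt x (-1) with hx | hx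
          · exact hbR x hx
          rcases eq_or_ne x 0 with rfl | hx0
          · exact z2
          rcases eq_or_ne x 1 with rfl | hx1
          · exact z3
          have hx2 : 2 ≤ x := by omega
          have hn : x = 2 + ((x - 2).toNat : ℤ) := by
            have h2 : (0:ℤ) ≤ x - 2 := by omega
            rw [Int.toNat_of_nonneg h2]; ring
          rw [hn]
          exact upR _
      exact hne (hall x0 i0)
    exact Matrix.exists_mulVec_eq_zero_iff.mp ⟨v, hvne, hv⟩
  · -- backward direction
    intro hdet0
    obtain ⟨v, hvne, hv⟩ := Matrix.exists_mulVec_eq_zero_iff.mpr hdet0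
    have e0 : lam * v 0 - C 1 0 1 * v 3 = 0 := by
      have h := congrFun hv 0
      simp [hA, Matrix.mulVec, dotProduct, Fin.sum_univ_four] at h
      linear_combination h
    have e1 : -(C 0 0 0) * v 0 + lam * v 1 - C 0 0 1 * v 2 = 0 := by
      have h := congrFun hv 1
      simp [hA, Matrix.mulVec, dotProduct, Fin.sum_univ_four] at h
      linear_combination h
    have e2 : -(C (-1) 1 0) * v 1 + lam * v 2 = 0 := by
      have h := congrFun hv 2
      simp [hA, Matrix.mulVec, dotProduct, Fin.sum_univ_four] at h
      linear_combination h
    have e3 : -(C 0 1 0) * v 0 - C 0 1 1 * v 2 + lam * v 3 = 0 := by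
      have h := congrFun hv 3
      simp [hA, Matrix.mulVec, dotProduct, Fin.sum_univ_four] at h
      linear_combination h
    have e0' : lam * v 0 - C 1 0 1 * v 3 = 0 := e0
    refine ⟨resPhi C lam v, ?_, ⟨1, one_pos, ?_⟩, ?_⟩
    · -- nonzero
      have : ∃ i : Fin 4, v i ≠ 0 := by
        by_contra h
        push_neg at h
        exact hvne (funext h)
      obtain ⟨i, hi⟩ := this
      fin_cases i
      · exact ⟨0, 0, by simpa [resPhi0] using hi⟩
      · exact ⟨-1, 0, by simpa [resPhi0] using hi⟩
      · exact ⟨0, 1, by simpa [resPhi1] using hi⟩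
      · exact ⟨1, 1, by simpa [resPhi1] using hi⟩
    · -- outgoing
      intro x hx
      constructor
      · rw [resPhi0, if_neg (by omega), if_neg (by omega), if_neg (by omega)]
      · rw [resPhi1, if_neg (by omega), if_neg (by omega), if_neg (by omega)]
    · -- eigenvalue equation
      intro x i
      fin_cases i
      · show qwalk C (resPhi C lam v) x 0 = lam * resPhi C lam v x 0
        have hgoal : (C (x + 1)).mulVec (resPhi C lam v (x + 1)) 0
            = lam * resPhi C lam v x 0 → qwalk C (resPhi C lam v) x 0
            = lam * resPhi C lam v x 0 := fun h => h
        apply hgoal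
        rw [Matrix.mulVec]
        simp only [dotProduct, Fin.sum_univ_two]
        obtain hx | rfl | rfl | rfl | hx : 1 ≤ x ∨ x = 0 ∨ x = -1 ∨ x = -2 ∨ x ≤ -3 := by omega
        · rw [hsupp (x + 1) (by omega) (by omega) (by omega)]
          rw [resPhi0, if_neg (by omega), if_neg (by omega), if_neg (by omega),
            resPhi0, if_neg (by omega), if_neg (by omega), if_neg (by omega)]
          simp [Matrix.one_apply]
        · norm_num [resPhi0, resPhi1]
          linear_combination -e0
        · norm_num [resPhi0, resPhi1]
          linear_combination -e1
        · have h1 : (-2 : ℤ) + 1 = -1 := by norm_num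
          rw [h1]
          rw [resPhi0, if_neg (by omega), if_pos rfl,
            resPhi1, if_neg (by omega), if_neg (by omega), if_neg (by omega),
            resPhi0, if_neg (by omega), if_neg (by omega), if_pos (by omega)]
          have h2 : ((-2 : ℤ) + 1) = (-1 : ℤ) := by norm_num
          rw [h2, zpow_neg_one]
          field_simp
          ring
        · rw [hsupp (x + 1) (by omega) (by omega) (by omega)]
          rw [resPhi0, if_neg (by omega), if_neg (by omega), if_pos (by omega),
            resPhi1, if_neg (by omega), if_neg (by omega), if_neg (by omega),
            resPhi0, if_neg (by omega), if_neg (by omega), if_pos (by omega)]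
          simp only [Matrix.one_apply_eq, Matrix.one_apply_ne (by decide : (0 : Fin 2) ≠ 1)]
          have h2 : (x + 1) + 1 = x + 1 + 1 := rfl
          rw [show x + 1 + 1 = (x + 1) + 1 from rfl, zpow_add_one₀ hlam (x + 1)]
          ring
      · show qwalk C (resPhi C lam v) x 1 = lam * resPhi C lam v x 1
        have hgoal : (C (x - 1)).mulVec (resPhi C lam v (x - 1)) 1
            = lam * resPhi C lam v x 1 → qwalk C (resPhi C lam v) x 1
            = lam * resPhi C lam v x 1 := fun h => h
        apply hgoal
        rw [Matrix.mulVec]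
        simp only [dotProduct, Fin.sum_univ_two]
        obtain hx | rfl | rfl | rfl | hx : x ≤ -1 ∨ x = 0 ∨ x = 1 ∨ x = 2 ∨ 3 ≤ x := by omega
        · rw [hsupp (x - 1) (by omega) (by omega) (by omega)]
          rw [resPhi1, if_neg (by omega), if_neg (by omega), if_neg (by omega),
            resPhi1, if_neg (by omega), if_neg (by omega), if_neg (by omega)]
          simp [Matrix.one_apply]
        · norm_num [resPhi0, resPhi1]
          linear_combination -e2
        · norm_num [resPhi0, resPhi1]
          linear_combination -e3
        · have h1 : (2 : ℤ) - 1 = 1 := by norm_num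
          rw [h1]
          rw [resPhi0, if_neg (by omega), if_neg (by omega), if_neg (by omega),
            resPhi1, if_neg (by omega), if_pos rfl,
            resPhi1, if_neg (by omega), if_neg (by omega), if_pos (by omega)]
          have h2 : ((1 : ℤ) - 2) = (-1 : ℤ) := by norm_num
          rw [h2, zpow_neg_one]
          field_simp
          ring
        · rw [hsupp (x - 1) (by omega) (by omega) (by omega)]
          rw [resPhi1, if_neg (by omega), if_neg (by omega), if_pos (by omega),
            resPhi1, if_neg (by omega), if_neg (by omega), if_pos (by omega),
            resPhi0, if_neg (by omega), if_neg (by omega), if_neg (by omega)]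
          simp only [Matrix.one_apply_eq, Matrix.one_apply_ne (by decide : (1 : Fin 2) ≠ 0)]
          rw [show 1 - (x - 1) = (1 - x) + 1 from by ring, zpow_add_one₀ hlam (1 - x)]
          ring
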